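/- Suppose that sup_{n,i≥1} μ_n/μ_{n+i} < ∞, that λ_n/μ_n → 0 as n → ∞, and that Σ_{n≥1} 1/μ_n < ∞. Then μ_{n+1}·e_n → 1 as n → ∞, i.e. e_n is asymptotically equivalent to 1/μ_{n+1}. -/

import Mathlib

open Filter Finset

/-- If `sup_{n,i≥1} μ_n/μ_{n+i} < ∞`, `λ_n/μ_n → 0` and `Σ 1/μ_n < ∞`, then the mean time
`e n = E_{n+1}(T_n)` to go from `n+1` to `n` satisfies `μ_{n+1}·e_n → 1`,
i.e. `e_n ~ 1/μ_{n+1}`. -/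
theorem stmt1 (lam mu : ℕ → ℝ)
    (hlam : ∀ n ≥ 1, 0 ≤ lam n) (hmu : ∀ n ≥ 1, 0 < mu n)
    (hsup : ∃ C : ℝ, ∀ n ≥ 1, ∀ i ≥ 1, mu n / mu (n + i) ≤ C)
    (hratio : Tendsto (fun n => lam n / mu n) atTop (nhds 0))
    (hsummu : Summable (fun n : ℕ => 1 / mu (n + 1)))
    (e : ℕ → ℝ)
    (he : ∀ n, e n = ∑' k : ℕ,
      (∏ j ∈ Finset.range k, lam (n + 1 + j)) / (∏ j ∈ Finset.range (k + 1), mu (n + 1 + j))) :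
    Tendsto (fun n => mu (n + 1) * e n) atTop (nhds 1) := by
  obtain ⟨C₀, hC₀⟩ := hsup
  set C := max C₀ 1 with hCdef
  have hC1 : (1:ℝ) ≤ C := le_max_right _ _
  have hCpos : (0:ℝ) < C := lt_of_lt_of_le one_pos hC1
  rw [Metric.tendsto_atTop]
  intro ε hε
  set ε₀ := min (ε / (4 * C)) (1 / (2 * C)) with hε₀def
  have hε₀pos : 0 < ε₀ := lt_min (by positivity) (by positivity)
  have hev : ∀ᶠ m in atTop, lam m / mu m < ε₀ := hratio.eventually (gt_mem_nhds hε₀pos)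
  obtain ⟨N, hN⟩ := eventually_atTop.mp hev
  set q := C * ε₀ with hqdef
  have hqpos : 0 < q := mul_pos hCpos hε₀pos
  have hqhalf : q ≤ 1 / 2 := by
    calc q ≤ C * (1 / (2 * C)) := by
            exact mul_le_mul_of_nonneg_left (min_le_right _ _) hCpos.le
      _ = 1 / 2 := by field_simp
  have hqeps : q ≤ ε / 4 := by
    calc q ≤ C * (ε / (4 * C)) := mul_le_mul_of_nonneg_left (min_le_left _ _) hCpos.le
      _ = ε / 4 := by field_simp
  have hqlt1 : q < 1 := lt_of_le_of_lt hqhalf (by norm_num)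
  refine ⟨max N 1, fun n hn => ?_⟩
  have hnN : N ≤ n := le_trans (le_max_left _ _) hn
  -- the terms
  set a : ℕ → ℝ := fun k =>
    (∏ j ∈ Finset.range k, lam (n + 1 + j)) / (∏ j ∈ Finset.range (k + 1), mu (n + 1 + j))
    with hadef
  set f : ℕ → ℝ := fun k => mu (n + 1) * a k with hfdef
  have hmu1 : 0 < mu (n + 1) := hmu _ (by omega)
  -- ratio bound
  have hratk : ∀ k : ℕ, 0 ≤ lam (n + 1 + k) / mu (n + 1 + (k + 1)) ∧
      lam (n + 1 + k) / mu (n + 1 + (k + 1)) ≤ q := by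
    intro k
    set m := n + 1 + k with hm
    have hm1 : 1 ≤ m := by omega
    have hmum : 0 < mu m := hmu m hm1
    have hmum1 : 0 < mu (m + 1) := hmu (m + 1) (by omega)
    have hme : n + 1 + (k + 1) = m + 1 := by omega
    rw [hme]
    constructor
    · exact div_nonneg (hlam m hm1) hmum1.le
    · have hsplit : lam m / mu (m + 1) = (lam m / mu m) * (mu m / mu (m + 1)) := by
        field_simp
      rw [hsplit]
      have h1 : lam m / mu m ≤ ε₀ := (hN m (by omega)).le
      have h2 : mu m / mu (m + 1) ≤ C := by
        have := hC₀ m hm1 1 le_rfl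
        exact le_trans this (le_max_left _ _)
      have h1' : 0 ≤ lam m / mu m := div_nonneg (hlam m hm1) hmum.le
      have h2' : 0 ≤ mu m / mu (m + 1) := div_nonneg hmum.le hmum1.le
      calc (lam m / mu m) * (mu m / mu (m + 1)) ≤ ε₀ * C :=
            mul_le_mul h1 h2 h2' hε₀pos.le
        _ = q := by rw [hqdef]; ring
  have hstep : ∀ k : ℕ, f (k + 1) = f k * (lam (n + 1 + k) / mu (n + 1 + (k + 1))) := by
    intro k
    simp only [hfdef, hadef]
    rw [Finset.prod_range_succ (fun j => lam (n + 1 + j)) k,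
      Finset.prod_range_succ (fun j => mu (n + 1 + j)) (k + 1)]
    ring
  have hf0 : f 0 = 1 := by
    simp only [hfdef, hadef, Finset.prod_range_zero, zero_add,
      Finset.prod_range_one, add_zero]
    field_simp
  have hfq : ∀ k, 0 ≤ f k ∧ f k ≤ q ^ k := by
    intro k
    induction k with
    | zero => simp [hf0]
    | succ k ih =>
      obtain ⟨h0, h1⟩ := ih
      obtain ⟨hr0, hr1⟩ := hratk k
      rw [hstep k]
      constructor
      · exact mul_nonneg h0 hr0
      · calc f k * (lam (n + 1 + k) / mu (n + 1 + (k + 1))) ≤ q ^ k * q :=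
              mul_le_mul h1 hr1 hr0 (pow_nonneg hqpos.le k)
          _ = q ^ (k + 1) := by ring
  have hsumgeo : Summable (fun k : ℕ => q ^ k) :=
    summable_geometric_of_lt_one hqpos.le hqlt1
  have hsumf : Summable f :=
    Summable.of_nonneg_of_le (fun k => (hfq k).1) (fun k => (hfq k).2) hsumgeo
  have hsumtail : Summable (fun k => f (k + 1)) := (summable_nat_add_iff 1).mpr hsumf
  have hkey : mu (n + 1) * e n = ∑' k, f k := by
    rw [he n, ← tsum_mul_left]
  have hsplit : (∑' k, f k) = f 0 + ∑' k, f (k + 1) := Summable.tsum_eq_zero_add hsumf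
  have htail_nonneg : 0 ≤ ∑' k, f (k + 1) := tsum_nonneg (fun k => (hfq (k + 1)).1)
  have htail_le : (∑' k, f (k + 1)) ≤ q * (1 - q)⁻¹ := by
    have h1 : (∑' k, f (k + 1)) ≤ ∑' k : ℕ, q * q ^ k := by
      apply Summable.tsum_le_tsum _ hsumtail (hsumgeo.mul_left q)
      intro k
      calc f (k + 1) ≤ q ^ (k + 1) := (hfq (k + 1)).2
        _ = q * q ^ k := by ring
    have h2 : (∑' k : ℕ, q * q ^ k) = q * (1 - q)⁻¹ := by
      rw [tsum_mul_left, tsum_geometric_of_lt_one hqpos.le hqlt1]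
    linarith
  have htail_le' : (∑' k, f (k + 1)) ≤ ε / 2 := by
    have hinv : (1 - q)⁻¹ ≤ 2 := by
      rw [inv_le_comm₀ (by linarith) (by norm_num)]
      linarith
    calc (∑' k, f (k + 1)) ≤ q * (1 - q)⁻¹ := htail_le
      _ ≤ q * 2 := mul_le_mul_of_nonneg_left hinv hqpos.le
      _ ≤ (ε / 4) * 2 := by nlinarith
      _ = ε / 2 := by ring
  rw [Real.dist_eq, hkey, hsplit, hf0]
  rw [abs_of_nonneg (by linarith)]
  linarith
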